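/- Let x₀ ∈ X and Z = {h x₀ h⁻¹ : h ∈ F(X∖{x₀})} ⊆ F(X). Then the full conjugacy class of x₀ in F(X) satisfies {g x₀ g⁻¹ : g ∈ F(X)} = {β z β⁻¹ : β ∈ F(Z), z ∈ Z}, where F(Z) is the subgroup of F(X) generated by Z. -/

import Mathlib

/-- Let `x₀ ∈ X` and `Z = {h x₀ h⁻¹ ; h ∈ F(X ∖ {x₀})}`. Then the conjugacy class of
`x₀` in `F(X)` satisfies `{g x₀ g⁻¹ ; g ∈ F(X)} = {β z β⁻¹ ; β ∈ F(Z), z ∈ Z}`,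
where `F(Z)` is the subgroup generated by `Z`. -/
theorem conjClass_eq_conj_by_FZ {X : Type*} (x₀ : X)
    (Z : Set (FreeGroup X))
    (hZ : Z = {z | ∃ h ∈ Subgroup.closure (FreeGroup.of '' {x | x ≠ x₀}),
      z = h * FreeGroup.of x₀ * h⁻¹}) :
    {y | ∃ g : FreeGroup X, y = g * FreeGroup.of x₀ * g⁻¹} =
      {y | ∃ β ∈ Subgroup.closure Z, ∃ z ∈ Z, y = β * z * β⁻¹} := by
  set H := Subgroup.closure (FreeGroup.of '' {x | x ≠ x₀}) with hH
  -- x₀ itself is in Z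
  have hx₀Z : FreeGroup.of x₀ ∈ Z := by
    rw [hZ]; exact ⟨1, one_mem _, by group⟩
  -- conjugation by H preserves Z
  have hconjZ : ∀ h ∈ H, ∀ z ∈ Z, h * z * h⁻¹ ∈ Z := by
    intro h hh z hz
    rw [hZ] at hz ⊢
    obtain ⟨h', hh', rfl⟩ := hz
    exact ⟨h * h', mul_mem hh hh', by group⟩
  -- conjugation by H preserves closure Z
  have hconjN : ∀ h ∈ H, ∀ n ∈ Subgroup.closure Z, h * n * h⁻¹ ∈ Subgroup.closure Z := by
    intro h hh n hn
    have : h * n * h⁻¹ ∈ (Subgroup.closure Z).map (MulAut.conj h).toMonoidHom :=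
      ⟨n, hn, rfl⟩
    rw [MonoidHom.map_closure] at this
    refine Subgroup.closure_mono ?_ this
    rintro _ ⟨z, hz, rfl⟩
    exact hconjZ h hh z hz
  -- decomposition g = n * h
  have hdecomp : ∀ g : FreeGroup X, ∃ n ∈ Subgroup.closure Z, ∃ h ∈ H, g = n * h := by
    intro g
    induction g using FreeGroup.induction_on with
    | C1 => exact ⟨1, one_mem _, 1, one_mem _, by group⟩
    | of x =>
      show ∃ n ∈ Subgroup.closure Z, ∃ h ∈ H, FreeGroup.of x = n * h
      by_cases hx : x = x₀
      · subst hx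
        exact ⟨FreeGroup.of x, Subgroup.subset_closure hx₀Z, 1, one_mem _, by group⟩
      · exact ⟨1, one_mem _, FreeGroup.of x,
          Subgroup.subset_closure ⟨x, hx, rfl⟩, by group⟩
    | inv_of x _ =>
      show ∃ n ∈ Subgroup.closure Z, ∃ h ∈ H, (FreeGroup.of x)⁻¹ = n * h
      by_cases hx : x = x₀
      · subst hx
        exact ⟨(FreeGroup.of x)⁻¹, inv_mem (Subgroup.subset_closure hx₀Z), 1,
          one_mem _, by group⟩
      · exact ⟨1, one_mem _, (FreeGroup.of x)⁻¹,
          inv_mem (Subgroup.subset_closure ⟨x, hx, rfl⟩), by group⟩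
    | mul a b ha hb =>
      obtain ⟨n₁, hn₁, h₁, hh₁, rfl⟩ := ha
      obtain ⟨n₂, hn₂, h₂, hh₂, rfl⟩ := hb
      exact ⟨n₁ * (h₁ * n₂ * h₁⁻¹), mul_mem hn₁ (hconjN h₁ hh₁ n₂ hn₂),
        h₁ * h₂, mul_mem hh₁ hh₂, by group⟩
  ext y
  constructor
  · rintro ⟨g, rfl⟩
    obtain ⟨n, hn, h, hh, rfl⟩ := hdecomp g
    refine ⟨n, hn, h * FreeGroup.of x₀ * h⁻¹, ?_, by group⟩
    rw [hZ]; exact ⟨h, hh, rfl⟩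
  · rintro ⟨β, _, z, hz, rfl⟩
    rw [hZ] at hz
    obtain ⟨h, _, rfl⟩ := hz
    exact ⟨β * h, by group⟩
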